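/- Let d, n, T ≥ 1, let K ⊆ [0,1]^d be convex, let u ∈ K, and set α = (1 − ‖u‖_∞)/4. For each t ∈ {1,…,T} and j ∈ {1,…,n}, let f_t^j : ℝ^d → ℝ be continuous DR-submodular and nonnegative on X = [0,1]^d, differentiable on X with continuous gradient satisfying ‖∇f_t^j(x)‖ ≤ G for all x ∈ X, let x̂_t^j ∈ K, set x_t^j = (x̂_t^j + u)/2, and define g_t^j(x) = ∫_0^1 (1/(8(1 − z/2)^3)) · ∇f_t^j((z/2)(x − u) + u) dz. Then for every i ∈ {1,…,n} and every x ∈ K: α·Σ_{t=1}^T Σ_{j=1}^n f_t^j(x) − Σ_{t=1}^T Σ_{j=1}^n f_t^j(x_t^i) ≤ Σ_{t=1}^T Σ_{j=1}^n ⟨g_t^j(x̂_t^j), x − x̂_t^i⟩ + G·Σ_{t=1}^T Σ_{j=1}^n ‖x̂_t^j − x̂_t^i‖. -/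

import Mathlib

open MeasureTheory Finset Set intervalIntegral

noncomputable section

/-- The unit cube `[0,1]^d` in `ℝ^d` (with Euclidean structure). -/
def cube (d : ℕ) : Set (EuclideanSpace ℝ (Fin d)) :=
  {x | ∀ i, x i ∈ Set.Icc (0 : ℝ) 1}

/-- `f` is continuous DR-submodular on the unit cube `[0,1]^d`: for coordinatewise
comparable points `x ≤ y` in the cube and any feasible move of size `z ≥ 0` along a
coordinate direction, the gain at `x` dominates the gain at `y`. -/
def DRSubmodularOn (d : ℕ) (f : EuclideanSpace ℝ (Fin d) → ℝ) : Prop :=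
  ∀ x y : EuclideanSpace ℝ (Fin d), x ∈ cube d → y ∈ cube d → (∀ i, x i ≤ y i) →
    ∀ (j : Fin d) (z : ℝ), 0 ≤ z →
      x + z • EuclideanSpace.single j (1 : ℝ) ∈ cube d →
      y + z • EuclideanSpace.single j (1 : ℝ) ∈ cube d →
      f (y + z • EuclideanSpace.single j (1 : ℝ)) - f y ≤
        f (x + z • EuclideanSpace.single j (1 : ℝ)) - f x

variable {d : ℕ}

local notation "E" => EuclideanSpace ℝ (Fin d)

lemma cube_convex : Convex ℝ (cube d) := by
  intro x hx y hy a b ha hb hab i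
  have hxi := hx i; have hyi := hy i
  have h : (a • x + b • y) i = a * x i + b * y i := by
    simp [PiLp.add_apply, PiLp.smul_apply, smul_eq_mul]
  rw [h]
  constructor
  · nlinarith [hxi.1, hyi.1]
  · nlinarith [hxi.2, hyi.2]

lemma lineHasDeriv {f : E → ℝ} {f' : E → E}
    (hgrad : ∀ x ∈ cube d, HasGradientWithinAt f (f' x) (cube d) x)
    {b₀ v : E} {S : ℝ}
    (hmem : ∀ s ∈ Icc (0:ℝ) S, b₀ + s • v ∈ cube d) {s : ℝ} (hs : s ∈ Icc (0:ℝ) S) :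
    HasDerivWithinAt (fun s : ℝ => f (b₀ + s • v)) (inner ℝ (f' (b₀ + s • v)) v : ℝ)
      (Icc 0 S) s := by
  have hγ : HasDerivWithinAt (fun s : ℝ => b₀ + s • v) v (Icc 0 S) s :=
    (((hasDerivAt_id s).smul_const v).const_add b₀).hasDerivWithinAt.congr_deriv (one_smul ℝ v)
  have hf := (hgrad _ (hmem s hs)).hasFDerivWithinAt
  have h2 := hf.comp_hasDerivWithinAt s hγ (fun z hz => hmem z hz)
  simp only [Function.comp, InnerProductSpace.toDual_apply_apply] at h2
  exact h2

lemma lineCont {f' : E → E} (hcont : ContinuousOn f' (cube d))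
    {b₀ v : E} {S : ℝ}
    (hmem : ∀ s ∈ Icc (0:ℝ) S, b₀ + s • v ∈ cube d) :
    ContinuousOn (fun s : ℝ => (inner ℝ (f' (b₀ + s • v)) v : ℝ)) (Icc 0 S) := by
  apply ContinuousOn.inner _ continuousOn_const
  exact hcont.comp (by fun_prop) (fun s hs => hmem s hs)

lemma lineFTC {f : E → ℝ} {f' : E → E}
    (hgrad : ∀ x ∈ cube d, HasGradientWithinAt f (f' x) (cube d) x)
    (hcont : ContinuousOn f' (cube d))
    {b₀ v : E} {S : ℝ} (hS : 0 ≤ S)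
    (hmem : ∀ s ∈ Icc (0:ℝ) S, b₀ + s • v ∈ cube d) :
    ∫ s in (0:ℝ)..S, (inner ℝ (f' (b₀ + s • v)) v : ℝ) = f (b₀ + S • v) - f b₀ := by
  have h0 : f (b₀ + S • v) - f b₀ =
      (fun s : ℝ => f (b₀ + s • v)) S - (fun s : ℝ => f (b₀ + s • v)) 0 := by norm_num
  rw [h0]
  apply integral_eq_sub_of_hasDeriv_right_of_le hS
  · exact fun s hs => ((lineHasDeriv hgrad hmem hs).continuousWithinAt)
  · intro s hs
    exact (lineHasDeriv hgrad hmem (Ioo_subset_Icc_self hs)).mono_of_mem_nhdsWithin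
      (Icc_mem_nhdsGT_of_mem ⟨hs.1.le, hs.2⟩)
  · exact ((lineCont hcont hmem).mono (by rw [uIcc_of_le hS])).intervalIntegrable

lemma eval_inner (v : E) (j : Fin d) :
    (inner ℝ v (EuclideanSpace.single j (1:ℝ)) : ℝ) = v j := by
  rw [real_inner_comm, EuclideanSpace.inner_single_left]
  simp

lemma grad_anti_aux {f : E → ℝ} {f' : E → E}
    (hsub : DRSubmodularOn d f)
    (hgrad : ∀ x ∈ cube d, HasGradientWithinAt f (f' x) (cube d) x)
    {a b : E} (ha : a ∈ cube d) (hb : b ∈ cube d) (hab : ∀ i, a i ≤ b i)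
    (j : Fin d) (hbj : b j < 1) :
    f' b j ≤ f' a j := by
  set v : E := EuclideanSpace.single j (1:ℝ) with hv
  set ε : ℝ := 1 - b j with hεdef
  have hε0 : 0 < ε := by simp only [hεdef]; linarith
  have happ : ∀ (c : E) (s : ℝ) (i : Fin d), (c + s • v) i = c i + s * (if i = j then 1 else 0) := by
    intro c s i
    simp [hv, PiLp.add_apply, PiLp.smul_apply, EuclideanSpace.single_apply, smul_eq_mul]
  have hmema : ∀ s ∈ Icc (0:ℝ) ε, a + s • v ∈ cube d := by
    intro s hs i
    rw [happ]
    rcases eq_or_ne i j with rfl | hij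
    · rw [if_pos rfl, mul_one]
      constructor
      · nlinarith [(ha i).1, hs.1]
      · have : a i ≤ b i := hab i
        simp only [hεdef] at hs
        nlinarith [hs.2]
    · simp only [if_neg hij, mul_zero, add_zero]; exact ha i
  have hmemb : ∀ s ∈ Icc (0:ℝ) ε, b + s • v ∈ cube d := by
    intro s hs i
    rw [happ]
    rcases eq_or_ne i j with rfl | hij
    · rw [if_pos rfl, mul_one]
      constructor
      · nlinarith [(hb i).1, hs.1]
      · simp only [hεdef] at hs; nlinarith [hs.2]
    · simp only [if_neg hij, mul_zero, add_zero]; exact hb i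
  have h0 : (0:ℝ) ∈ Icc (0:ℝ) ε := ⟨le_refl _, hε0.le⟩
  have hda := lineHasDeriv hgrad hmema h0
  have hdb := lineHasDeriv hgrad hmemb h0
  rw [hasDerivWithinAt_iff_tendsto_slope] at hda hdb
  have hss : Ioc (0:ℝ) ε ⊆ Icc (0:ℝ) ε \ {0} :=
    fun z hz => ⟨⟨hz.1.le, hz.2⟩, by simpa using ne_of_gt hz.1⟩
  have hda' := hda.mono_left (nhdsWithin_mono 0 hss)
  have hdb' := hdb.mono_left (nhdsWithin_mono 0 hss)
  rw [nhdsWithin_Ioc_eq_nhdsGT hε0] at hda' hdb'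
  have hkey : (inner ℝ (f' (b + (0:ℝ) • v)) v : ℝ) ≤ inner ℝ (f' (a + (0:ℝ) • v)) v := by
    refine le_of_tendsto_of_tendsto hdb' hda' ?_
    filter_upwards [Ioc_mem_nhdsGT_of_mem (⟨le_refl 0, hε0⟩ : (0:ℝ) ∈ Ico (0:ℝ) ε)] with z hz
    have hdr := hsub a b ha hb hab j z hz.1.le (hmema z ⟨hz.1.le, hz.2⟩) (hmemb z ⟨hz.1.le, hz.2⟩)
    simp only [slope_def_field, zero_smul, add_zero, sub_zero]
    exact div_le_div_of_nonneg_right hdr hz.1.le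
  have e1 : b + (0:ℝ) • v = b := by simp
  have e2 : a + (0:ℝ) • v = a := by simp
  rw [e1, e2, eval_inner, eval_inner] at hkey
  exact hkey

lemma grad_anti {f : E → ℝ} {f' : E → E}
    (hsub : DRSubmodularOn d f)
    (hgrad : ∀ x ∈ cube d, HasGradientWithinAt f (f' x) (cube d) x)
    (hcont : ContinuousOn f' (cube d))
    {a b : E} (ha : a ∈ cube d) (hb : b ∈ cube d) (hab : ∀ i, a i ≤ b i)
    (j : Fin d) :
    f' b j ≤ f' a j := by
  have hsm : ∀ (c : E), c ∈ cube d → ∀ ε ∈ Icc (0:ℝ) 1, (1-ε) • c ∈ cube d := by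
    intro c hc ε hε i
    have h : ((1-ε) • c) i = (1-ε) * c i := by simp [PiLp.smul_apply, smul_eq_mul]
    rw [h]
    constructor
    · nlinarith [(hc i).1, hε.1, hε.2]
    · nlinarith [(hc i).2, hε.1, hε.2]
  have key : ∀ ε ∈ Ioc (0:ℝ) 1, f' ((1-ε) • b) j ≤ f' ((1-ε) • a) j := by
    intro ε hε
    apply grad_anti_aux hsub hgrad (hsm a ha ε ⟨hε.1.le, hε.2⟩) (hsm b hb ε ⟨hε.1.le, hε.2⟩)
    · intro i
      have h1 : ((1-ε) • a) i = (1-ε) * a i := by simp [PiLp.smul_apply, smul_eq_mul]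
      have h2 : ((1-ε) • b) i = (1-ε) * b i := by simp [PiLp.smul_apply, smul_eq_mul]
      rw [h1, h2]
      nlinarith [hab i, hε.2]
    · have h2 : ((1-ε) • b) j = (1-ε) * b j := by simp [PiLp.smul_apply, smul_eq_mul]
      rw [h2]
      nlinarith [(hb j).2, hε.1, hε.2]
  -- now take the limit ε → 0⁺
  have tend : ∀ c : E, c ∈ cube d →
      Filter.Tendsto (fun ε : ℝ => f' ((1-ε) • c) j) (nhdsWithin 0 (Ioi 0)) (nhds (f' c j)) := by
    intro c hc
    have hφ : Filter.Tendsto (fun ε : ℝ => (1-ε) • c) (nhdsWithin 0 (Ioi 0)) (nhdsWithin c (cube d)) := by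
      rw [tendsto_nhdsWithin_iff]
      constructor
      · have hcont2 : Continuous (fun ε : ℝ => (1-ε) • c) := by fun_prop
        have := hcont2.tendsto 0
        simp only [sub_zero, one_smul] at this
        exact this.mono_left nhdsWithin_le_nhds
      · filter_upwards [Ioc_mem_nhdsGT_of_mem (⟨le_refl 0, zero_lt_one⟩ : (0:ℝ) ∈ Ico (0:ℝ) 1)] with ε hε
        exact hsm c hc ε ⟨hε.1.le, hε.2⟩
    have hc2 : Filter.Tendsto f' (nhdsWithin c (cube d)) (nhds (f' c)) := hcont c hc
    have := hc2.comp hφ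
    exact ((EuclideanSpace.proj j).continuous.tendsto (f' c)).comp this
  refine le_of_tendsto_of_tendsto (tend b hb) (tend a ha) ?_
  filter_upwards [Ioc_mem_nhdsGT_of_mem (⟨le_refl 0, zero_lt_one⟩ : (0:ℝ) ∈ Ico (0:ℝ) 1)] with ε hε
  exact key ε hε

lemma grad_anti_inner {f : E → ℝ} {f' : E → E}
    (hsub : DRSubmodularOn d f)
    (hgrad : ∀ x ∈ cube d, HasGradientWithinAt f (f' x) (cube d) x)
    (hcont : ContinuousOn f' (cube d))
    {a b v : E} (ha : a ∈ cube d) (hb : b ∈ cube d) (hab : ∀ i, a i ≤ b i)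
    (hv : ∀ i, 0 ≤ v i) :
    (inner ℝ (f' b) v : ℝ) ≤ inner ℝ (f' a) v := by
  rw [PiLp.inner_apply, PiLp.inner_apply]
  apply Finset.sum_le_sum
  intro i _
  simp only [RCLike.inner_apply, conj_trivial]
  exact mul_le_mul_of_nonneg_left (grad_anti hsub hgrad hcont ha hb hab i) (hv i)

def vsup (p y : E) : E := WithLp.toLp 2 (fun i => max (p i) (y i))
def vinf (p y : E) : E := WithLp.toLp 2 (fun i => min (p i) (y i))

lemma vsup_apply (p y : E) (i : Fin d) : vsup p y i = max (p i) (y i) := rfl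
lemma vinf_apply (p y : E) (i : Fin d) : vinf p y i = min (p i) (y i) := rfl

lemma vsup_mem {p y : E} (hp : p ∈ cube d) (hy : y ∈ cube d) : vsup p y ∈ cube d :=
  fun i => ⟨le_max_of_le_left (hp i).1, max_le (hp i).2 (hy i).2⟩

lemma vinf_mem {p y : E} (hp : p ∈ cube d) (hy : y ∈ cube d) : vinf p y ∈ cube d :=
  fun i => ⟨le_min (hp i).1 (hy i).1, min_le_of_left_le (hp i).2⟩

lemma grad_exchange {f : E → ℝ} {f' : E → E}
    (hsub : DRSubmodularOn d f)
    (hgrad : ∀ x ∈ cube d, HasGradientWithinAt f (f' x) (cube d) x)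
    (hcont : ContinuousOn f' (cube d))
    {p y : E} (hp : p ∈ cube d) (hy : y ∈ cube d) :
    f (vsup p y) + f (vinf p y) - 2 * f p ≤ inner ℝ (f' p) (y - p) := by
  set v1 : E := vsup p y - p with hv1def
  set v2 : E := p - vinf p y with hv2def
  have hv1 : ∀ i, v1 i = max (p i) (y i) - p i := by
    intro i; simp [hv1def, PiLp.sub_apply, vsup_apply]
  have hv2 : ∀ i, v2 i = p i - min (p i) (y i) := by
    intro i; simp [hv2def, PiLp.sub_apply, vinf_apply]
  have hv10 : ∀ i, 0 ≤ v1 i := fun i => by rw [hv1]; simp [le_max_left]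
  have hv20 : ∀ i, 0 ≤ v2 i := fun i => by rw [hv2]; simp [min_le_left]
  have happ1 : ∀ (s : ℝ) (i : Fin d), (p + s • v1) i = p i + s * v1 i := by
    intro s i; simp [PiLp.add_apply, PiLp.smul_apply, smul_eq_mul]
  have happ2 : ∀ (s : ℝ) (i : Fin d), (vinf p y + s • v2) i = min (p i) (y i) + s * v2 i := by
    intro s i; simp [PiLp.add_apply, PiLp.smul_apply, smul_eq_mul, vinf_apply]
  have hmem1 : ∀ s ∈ Icc (0:ℝ) 1, p + s • v1 ∈ cube d := by
    intro s hs i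
    rw [happ1, hv1]
    constructor
    · nlinarith [(hp i).1, hs.1, le_max_left (p i) (y i)]
    · nlinarith [hs.1, hs.2, le_max_left (p i) (y i), max_le (hp i).2 (hy i).2]
  have hmem2 : ∀ s ∈ Icc (0:ℝ) 1, vinf p y + s • v2 ∈ cube d := by
    intro s hs i
    rw [happ2, hv2]
    constructor
    · nlinarith [hs.1, min_le_left (p i) (y i), le_min (hp i).1 (hy i).1]
    · nlinarith [hs.1, hs.2, min_le_left (p i) (y i), (hp i).2, le_min (hp i).1 (hy i).1]
  have hend1 : p + (1:ℝ) • v1 = vsup p y := by rw [one_smul, hv1def]; abel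
  have hend2 : vinf p y + (1:ℝ) • v2 = p := by rw [one_smul, hv2def]; abel
  -- (N1)
  have hft1 := lineFTC hgrad hcont zero_le_one hmem1
  rw [hend1] at hft1
  have hb1 : ∫ s in (0:ℝ)..1, (inner ℝ (f' (p + s • v1)) v1 : ℝ) ≤ (inner ℝ (f' p) v1 : ℝ) := by
    have h := intervalIntegral.integral_mono_on zero_le_one
      (((lineCont hcont hmem1).mono (by rw [uIcc_of_le (zero_le_one (α:=ℝ))])).intervalIntegrable)
      (intervalIntegrable_const (μ := volume))
      (fun s hs => grad_anti_inner hsub hgrad hcont hp (hmem1 s hs)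
        (fun i => by rw [happ1]; nlinarith [hv10 i, hs.1]) hv10)
    simpa using h
  -- (N2)
  have hft2 := lineFTC hgrad hcont zero_le_one hmem2
  rw [hend2] at hft2
  have hb2 : (inner ℝ (f' p) v2 : ℝ) ≤ ∫ s in (0:ℝ)..1, (inner ℝ (f' (vinf p y + s • v2)) v2 : ℝ) := by
    have h := intervalIntegral.integral_mono_on zero_le_one
      (intervalIntegrable_const (μ := volume))
      (((lineCont hcont hmem2).mono (by rw [uIcc_of_le (zero_le_one (α:=ℝ))])).intervalIntegrable)
      (fun s hs => grad_anti_inner hsub hgrad hcont (hmem2 s hs) hp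
        (fun i => by rw [happ2]; nlinarith [hv20 i, hs.2, min_le_left (p i) (y i), hv2 i]) hv20)
    simpa using h
  have hdiff : v1 - v2 = y - p := by
    apply PiLp.ext; intro i
    rw [PiLp.sub_apply, hv1, hv2, PiLp.sub_apply]
    have := max_add_min (p i) (y i)
    linarith
  have hsplit : (inner ℝ (f' p) (y - p) : ℝ) = inner ℝ (f' p) v1 - inner ℝ (f' p) v2 := by
    rw [← inner_sub_right, hdiff]
  rw [hsplit]
  linarith [hft1, hft2, hb1, hb2]

lemma sup_lower {f : E → ℝ} {f' : E → E}
    (hsub : DRSubmodularOn d f)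
    (hgrad : ∀ x ∈ cube d, HasGradientWithinAt f (f' x) (cube d) x)
    (hcont : ContinuousOn f' (cube d))
    (hnonneg : ∀ x ∈ cube d, 0 ≤ f x)
    {p y : E} (hp : p ∈ cube d) (hy : y ∈ cube d)
    {m : ℝ} (hm0 : 0 ≤ m) (hm1 : m ≤ 1) (hpm : ∀ i, p i ≤ m) :
    (1 - m) * f y ≤ f (vsup p y) := by
  rcases eq_or_lt_of_le hm0 with hm | hm
  · have hvy : vsup p y = y :=
      PiLp.ext (fun i => max_eq_right (le_trans (le_trans (hpm i) hm.symm.le) (hy i).1))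
    rw [hvy, ← hm]
    simp
  set M : ℝ := m⁻¹ with hMdef
  have hM1 : 1 ≤ M := by
    rw [hMdef, le_inv_comm₀] <;> simp [hm, hm1]
  have hMm : m * M = 1 := mul_inv_cancel₀ (ne_of_gt hm)
  have hM0 : 0 < M := by positivity
  set v : E := vsup p y - y with hvdef
  have hv : ∀ i, v i = max (p i) (y i) - y i := by
    intro i; simp [hvdef, PiLp.sub_apply, vsup_apply]
  have hv0 : ∀ i, 0 ≤ v i := fun i => by rw [hv]; simp [le_max_right]
  have happ : ∀ (s : ℝ) (i : Fin d), (y + s • v) i = y i + s * v i := by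
    intro s i; simp [PiLp.add_apply, PiLp.smul_apply, smul_eq_mul]
  have hmem : ∀ s ∈ Icc (0:ℝ) M, y + s • v ∈ cube d := by
    intro s hs i
    rw [happ]
    refine ⟨by nlinarith [(hy i).1, hs.1, hv0 i], ?_⟩
    rcases le_or_gt (p i) (y i) with h | h
    · have : v i = 0 := by rw [hv, max_eq_right h]; ring
      rw [this]; simpa using (hy i).2
    · have hvi : v i = p i - y i := by rw [hv, max_eq_left h.le]
      have h1 : p i - y i ≤ m * (1 - y i) := by nlinarith [hpm i, (hy i).1, (hy i).2]
      have h2 : s * v i ≤ M * (m * (1 - y i)) := by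
        rw [hvi]
        have := mul_le_mul hs.2 h1 (by linarith) hM0.le
        linarith [this]
      have h3 : M * (m * (1 - y i)) = 1 - y i := by
        rw [← mul_assoc, mul_comm M m, hMm, one_mul]
      linarith [h2, h3 ▸ h2]
  have hmem1 : ∀ s ∈ Icc (0:ℝ) 1, y + s • v ∈ cube d :=
    fun s hs => hmem s ⟨hs.1, hs.2.trans hM1⟩
  have hend : y + (1:ℝ) • v = vsup p y := by rw [one_smul, hvdef]; abel
  have hftM := lineFTC hgrad hcont hM0.le hmem
  have hft1 := lineFTC hgrad hcont zero_le_one hmem1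
  rw [hend] at hft1
  set Φ : ℝ → ℝ := fun s => (inner ℝ (f' (y + s • v)) v : ℝ) with hΦdef
  have hcontM : ContinuousOn Φ (Icc 0 M) := lineCont hcont hmem
  have hint01 : IntervalIntegrable Φ volume 0 1 :=
    ((hcontM.mono (show Icc (0:ℝ) 1 ⊆ Icc 0 M from fun s hs => ⟨hs.1, hs.2.trans hM1⟩)).mono
      (by rw [uIcc_of_le (zero_le_one (α:=ℝ))])).intervalIntegrable
  have hint1M : IntervalIntegrable Φ volume 1 M :=
    ((hcontM.mono (show Icc (1:ℝ) M ⊆ Icc 0 M from fun s hs => ⟨zero_le_one.trans hs.1, hs.2⟩)).mono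
      (by rw [uIcc_of_le hM1])).intervalIntegrable
  have hadd : (∫ s in (0:ℝ)..1, Φ s) + ∫ s in (1:ℝ)..M, Φ s = ∫ s in (0:ℝ)..M, Φ s :=
    intervalIntegral.integral_add_adjacent_intervals hint01 hint1M
  have hΦanti : ∀ s t : ℝ, s ∈ Icc (0:ℝ) M → t ∈ Icc (0:ℝ) M → s ≤ t → Φ t ≤ Φ s := by
    intro s t hs ht hst
    exact grad_anti_inner hsub hgrad hcont (hmem s hs) (hmem t ht)
      (fun i => by rw [happ, happ]; nlinarith [hv0 i]) hv0
  have h1M : (1:ℝ) ∈ Icc (0:ℝ) M := ⟨zero_le_one, hM1⟩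
  have hb1 : ∫ s in (1:ℝ)..M, Φ s ≤ (M - 1) * Φ 1 := by
    have h := intervalIntegral.integral_mono_on hM1 hint1M (intervalIntegrable_const (μ := volume))
      (fun s hs => hΦanti 1 s h1M ⟨zero_le_one.trans hs.1, hs.2⟩ hs.1)
    simpa [smul_eq_mul, mul_comm] using h
  have hb2 : Φ 1 ≤ ∫ s in (0:ℝ)..1, Φ s := by
    have h := intervalIntegral.integral_mono_on zero_le_one (intervalIntegrable_const (μ := volume))
      hint01 (fun s hs => hΦanti s 1 ⟨hs.1, hs.2.trans hM1⟩ h1M hs.2)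
    simpa using h
  have hfM0 : 0 ≤ f (y + M • v) := hnonneg _ (hmem M ⟨hM0.le, le_refl _⟩)
  have hchain : f (y + M • v) - f y ≤ M * (f (vsup p y) - f y) := by
    have h4 : (M - 1) * Φ 1 ≤ (M - 1) * (f (vsup p y) - f y) := by
      rw [← hft1]
      exact mul_le_mul_of_nonneg_left hb2 (by linarith)
    calc f (y + M • v) - f y = (∫ s in (0:ℝ)..1, Φ s) + ∫ s in (1:ℝ)..M, Φ s := by
          rw [hadd, hftM]
      _ ≤ (f (vsup p y) - f y) + (M - 1) * (f (vsup p y) - f y) := by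
          linarith [hb1, h4, hft1]
      _ = M * (f (vsup p y) - f y) := by ring
  have h5 : m * (M * (f (vsup p y) - f y)) = f (vsup p y) - f y := by
    rw [← mul_assoc, hMm, one_mul]
  nlinarith [mul_le_mul_of_nonneg_left hchain hm.le, h5, mul_nonneg hm.le hfM0]

lemma integral_a : ∫ z in (0:ℝ)..1, 1/(8*(1-z/2)^2) = 1/4 := by
  have hderiv : ∀ z ∈ Set.uIcc (0:ℝ) 1,
      HasDerivAt (fun z : ℝ => (4 - 2*z)⁻¹) (1/(8*(1-z/2)^2)) z := by
    intro z hz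
    rw [Set.uIcc_of_le zero_le_one] at hz
    have hne : (4 - 2*z) ≠ 0 := by nlinarith [hz.2]
    have h1 : HasDerivAt (fun z : ℝ => 4 - 2*z) (-(2*1)) z :=
      (((hasDerivAt_id z).const_mul 2).const_sub 4)
    have h2 := h1.inv hne
    refine h2.congr_deriv (Eq.symm ?_)
    have h15 : (0:ℝ) < 1 - z/2 := by linarith [hz.2]
    have hd1 : (8:ℝ)*(1-z/2)^2 ≠ 0 := by positivity
    rw [div_eq_div_iff hd1 (pow_ne_zero 2 hne)]
    ring
  have hint : IntervalIntegrable (fun z : ℝ => 1/(8*(1-z/2)^2)) volume 0 1 := by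
    apply ContinuousOn.intervalIntegrable
    apply ContinuousOn.div continuousOn_const (by fun_prop)
    intro z hz
    rw [Set.uIcc_of_le zero_le_one] at hz
    have : (0:ℝ) < 1 - z/2 := by linarith [hz.2]
    positivity
  rw [intervalIntegral.integral_eq_sub_of_hasDerivAt hderiv hint]
  norm_num

lemma integral_w : ∫ z in (0:ℝ)..1, 1/(8*(1-z/2)^3) = 3/8 := by
  have hderiv : ∀ z ∈ Set.uIcc (0:ℝ) 1,
      HasDerivAt (fun z : ℝ => (2*(2 - z)^2)⁻¹) (1/(8*(1-z/2)^3)) z := by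
    intro z hz
    rw [Set.uIcc_of_le zero_le_one] at hz
    have hzz : (0:ℝ) < 2 - z := by linarith [hz.2]
    have hne : (2*(2 - z)^2) ≠ 0 := by positivity
    have h0 : HasDerivAt (fun z : ℝ => 2 - z) (-1) z := by
      simpa using (hasDerivAt_id z).const_sub 2
    have h1 := (h0.pow 2).const_mul 2
    have h2 := h1.inv hne
    refine h2.congr_deriv (Eq.symm ?_)
    have h15 : (0:ℝ) < 1 - z/2 := by linarith [hz.2]
    have hd1 : (8:ℝ)*(1-z/2)^3 ≠ 0 := by positivity
    simp only [Pi.pow_apply]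
    rw [div_eq_div_iff hd1 (pow_ne_zero 2 hne)]
    ring
  have hint : IntervalIntegrable (fun z : ℝ => 1/(8*(1-z/2)^3)) volume 0 1 := by
    apply ContinuousOn.intervalIntegrable
    apply ContinuousOn.div continuousOn_const (by fun_prop)
    intro z hz
    rw [Set.uIcc_of_le zero_le_one] at hz
    have : (0:ℝ) < 1 - z/2 := by linarith [hz.2]
    positivity
  rw [intervalIntegral.integral_eq_sub_of_hasDerivAt hderiv hint]
  norm_num

lemma deriv_q {z : ℝ} (hz : z ∈ Set.Icc (0:ℝ) 1) :
    HasDerivAt (fun z : ℝ => (4*(1-z/2)^2)⁻¹) (2 * (1/(8*(1-z/2)^3))) z := by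
  have hzz : (0:ℝ) < 1 - z/2 := by linarith [hz.2]
  have hne : (4*(1-z/2)^2) ≠ 0 := by positivity
  have h0 : HasDerivAt (fun z : ℝ => 1 - z/2) (-(2:ℝ)⁻¹) z := by
    simpa [div_eq_mul_inv] using ((hasDerivAt_id z).mul_const (2:ℝ)⁻¹).const_sub 1
  have h1 := (h0.pow 2).const_mul 4
  have h2 := h1.inv hne
  refine h2.congr_deriv (Eq.symm ?_)
  have hd1 : (8:ℝ)*(1-z/2)^3 ≠ 0 := by positivity
  simp only [Pi.pow_apply]
  rw [show (2:ℝ) * (1/(8*(1-z/2)^3)) = 2/(8*(1-z/2)^3) by ring,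
    div_eq_div_iff hd1 (pow_ne_zero 2 hne)]
  ring

set_option maxHeartbeats 2000000 in
lemma core_ineq {f : E → ℝ} {f' : E → E}
    (hsub : DRSubmodularOn d f)
    (hgrad : ∀ x ∈ cube d, HasGradientWithinAt f (f' x) (cube d) x)
    (hcont : ContinuousOn f' (cube d))
    (hnonneg : ∀ x ∈ cube d, 0 ≤ f x)
    {u xh y : E} (hu : u ∈ cube d) (hxh : xh ∈ cube d) (hy : y ∈ cube d)
    {ν : ℝ} (hν0 : 0 ≤ ν) (hν1 : ν ≤ 1) (hνu : ∀ i, u i ≤ ν) :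
    (1 - ν)/4 * f y - f ((2:ℝ)⁻¹ • (xh + u)) ≤
      (inner ℝ (∫ z in (0:ℝ)..1, (1 / (8 * (1 - z / 2) ^ 3)) • f' ((z / 2) • (xh - u) + u))
        (y - xh) : ℝ) := by
  set v : E := (2:ℝ)⁻¹ • (xh - u) with hvdef
  have hcurve : ∀ z : ℝ, (z / 2) • (xh - u) + u = u + z • v := by
    intro z
    rw [hvdef, smul_smul, add_comm, div_eq_mul_inv]
  have happ : ∀ (z : ℝ) (i : Fin d), (u + z • v) i = u i + z * (2⁻¹ * (xh i - u i)) := by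
    intro z i
    simp [hvdef, PiLp.add_apply, PiLp.smul_apply, PiLp.sub_apply, smul_eq_mul]
  have hmem : ∀ z ∈ Icc (0:ℝ) 1, u + z • v ∈ cube d := by
    intro z hz i
    rw [happ]
    constructor
    · nlinarith [(hu i).1, (hxh i).1, hz.1, hz.2]
    · nlinarith [(hu i).2, (hxh i).2, hz.1, hz.2]
  -- continuity facts
  have hwcont : ContinuousOn (fun z : ℝ => 1 / (8 * (1 - z / 2) ^ 3)) (Icc (0:ℝ) 1) := by
    apply ContinuousOn.div continuousOn_const (by fun_prop)
    intro z hz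
    have : (0:ℝ) < 1 - z/2 := by linarith [hz.2]
    positivity
  have hacont : ContinuousOn (fun z : ℝ => 1 / (8 * (1 - z / 2) ^ 2)) (Icc (0:ℝ) 1) := by
    apply ContinuousOn.div continuousOn_const (by fun_prop)
    intro z hz
    have : (0:ℝ) < 1 - z/2 := by linarith [hz.2]
    positivity
  have hqcont : ContinuousOn (fun z : ℝ => ((4:ℝ) * (1 - z / 2) ^ 2)⁻¹) (Icc (0:ℝ) 1) := by
    apply ContinuousOn.inv₀ (by fun_prop)
    intro z hz
    have : (0:ℝ) < 1 - z/2 := by linarith [hz.2]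
    positivity
  have hc_curve : ContinuousOn (fun z : ℝ => f' (u + z • v)) (Icc (0:ℝ) 1) :=
    hcont.comp (by fun_prop) (fun z hz => hmem z hz)
  have hf_curve : ContinuousOn (fun z : ℝ => f (u + z • v)) (Icc (0:ℝ) 1) := by
    have hfc : ContinuousOn f (cube d) := fun x hx => (hgrad x hx).continuousWithinAt
    exact hfc.comp (by fun_prop) (fun z hz => hmem z hz)
  have hΦcont : ContinuousOn (fun z : ℝ => (inner ℝ (f' (u + z • v)) v : ℝ)) (Icc (0:ℝ) 1) :=
    lineCont hcont hmem
  have hint_vec : IntervalIntegrable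
      (fun z : ℝ => (1 / (8 * (1 - z / 2) ^ 3)) • f' (u + z • v)) volume 0 1 := by
    apply ContinuousOn.intervalIntegrable
    rw [uIcc_of_le (zero_le_one (α:=ℝ))]
    exact hwcont.smul hc_curve
  -- Step A : inner ℝ of the integral
  have hGinner : (inner ℝ (∫ z in (0:ℝ)..1, (1 / (8 * (1 - z / 2) ^ 3)) • f' (u + z • v))
        (y - xh) : ℝ)
      = ∫ z in (0:ℝ)..1, (1 / (8 * (1 - z / 2) ^ 3)) *
          (inner ℝ (f' (u + z • v)) (y - xh) : ℝ) := by
    calc (inner ℝ (∫ z in (0:ℝ)..1, (1 / (8 * (1 - z / 2) ^ 3)) • f' (u + z • v)) (y - xh) : ℝ)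
        = (innerSL ℝ (y - xh)) (∫ z in (0:ℝ)..1, (1 / (8 * (1 - z / 2) ^ 3)) • f' (u + z • v)) := by
          rw [innerSL_apply_apply, real_inner_comm]
      _ = ∫ z in (0:ℝ)..1,
            (innerSL ℝ (y - xh)) ((1 / (8 * (1 - z / 2) ^ 3)) • f' (u + z • v)) :=
          (ContinuousLinearMap.intervalIntegral_comp_comm _ hint_vec).symm
      _ = ∫ z in (0:ℝ)..1, (1 / (8 * (1 - z / 2) ^ 3)) *
            (inner ℝ (f' (u + z • v)) (y - xh) : ℝ) := by
          apply intervalIntegral.integral_congr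
          intro z _
          simp only [innerSL_apply_apply, real_inner_smul_right]
          rw [real_inner_comm]
  -- pointwise key inequality
  have hkey : ∀ z ∈ Icc (0:ℝ) 1,
      (1 - ν) * f y * (1 / (8 * (1 - z / 2) ^ 2)) -
          ((inner ℝ (f' (u + z • v)) v : ℝ) * ((4:ℝ) * (1 - z / 2) ^ 2)⁻¹ +
            f (u + z • v) * (2 * (1 / (8 * (1 - z / 2) ^ 3))))
        ≤ (1 / (8 * (1 - z / 2) ^ 3)) * (inner ℝ (f' (u + z • v)) (y - xh) : ℝ) := by
    intro z hz
    set p : E := u + z • v with hpdef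
    have hpc : p ∈ cube d := hmem z hz
    have hzz : (0:ℝ) < 1 - z/2 := by linarith [hz.2]
    set m : ℝ := z/2 + (1 - z/2) * ν with hmdef
    have hm0 : 0 ≤ m := by rw [hmdef]; nlinarith [hz.1]
    have hm1 : m ≤ 1 := by rw [hmdef]; nlinarith [hz.2]
    have hpm : ∀ i, p i ≤ m := by
      intro i
      rw [hpdef, happ, hmdef]
      nlinarith [hνu i, (hxh i).2, (hu i).2, hz.1, hz.2, (hu i).1]
    have hex := grad_exchange hsub hgrad hcont hpc hy
    have hsup := sup_lower hsub hgrad hcont hnonneg hpc hy hm0 hm1 hpm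
    have hinf0 : 0 ≤ f (vinf p y) := hnonneg _ (vinf_mem hpc hy)
    have h1 : (1 - m) * f y - 2 * f p ≤ (inner ℝ (f' p) (y - p) : ℝ) := by linarith
    have hxp : y - xh = (y - p) - (2 - z) • v := by
      apply PiLp.ext
      intro i
      rw [PiLp.sub_apply, PiLp.sub_apply, PiLp.sub_apply, PiLp.smul_apply, hpdef, happ]
      have hvi : v i = 2⁻¹ * (xh i - u i) := by
        simp [hvdef, PiLp.smul_apply, PiLp.sub_apply, smul_eq_mul]
      rw [hvi, smul_eq_mul]
      ring
    have hdec : (inner ℝ (f' p) (y - xh) : ℝ)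
        = (inner ℝ (f' p) (y - p) : ℝ) - (2 - z) * (inner ℝ (f' p) v : ℝ) := by
      rw [hxp, inner_sub_right, real_inner_smul_right]
    have hw0 : (0:ℝ) ≤ 1 / (8 * (1 - z / 2) ^ 3) := by positivity
    have hmul := mul_le_mul_of_nonneg_left h1 hw0
    have e1 : (1 / (8 * (1 - z / 2) ^ 3)) * ((1 - m) * f y)
        = (1 - ν) * f y * (1 / (8 * (1 - z / 2) ^ 2)) := by
      rw [hmdef]
      have hd1 : (8:ℝ)*(1-z/2)^3 ≠ 0 := by positivity
      have hd2 : (8:ℝ)*(1-z/2)^2 ≠ 0 := by positivity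
      rw [one_div_mul_eq_div, mul_one_div, div_eq_div_iff hd1 hd2]
      ring
    have e2 : (1 / (8 * (1 - z / 2) ^ 3)) * (2 - z) = ((4:ℝ) * (1 - z / 2) ^ 2)⁻¹ := by
      have hd1 : (8:ℝ)*(1-z/2)^3 ≠ 0 := by positivity
      have hd2 : (4:ℝ)*(1-z/2)^2 ≠ 0 := by positivity
      rw [one_div_mul_eq_div, inv_eq_one_div, div_eq_div_iff hd1 hd2]
      ring
    have goal_eq : (1 / (8 * (1 - z / 2) ^ 3)) * (inner ℝ (f' p) (y - xh) : ℝ)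
        = (1 / (8 * (1 - z / 2) ^ 3)) * (inner ℝ (f' p) (y - p) : ℝ)
          - ((4:ℝ) * (1 - z / 2) ^ 2)⁻¹ * (inner ℝ (f' p) v : ℝ) := by
      rw [hdec, mul_sub, ← mul_assoc, e2]
    rw [goal_eq]
    have expand : (1 / (8 * (1 - z / 2) ^ 3)) * ((1 - m) * f y - 2 * f p)
        = (1 - ν) * f y * (1 / (8 * (1 - z / 2) ^ 2))
          - f p * (2 * (1 / (8 * (1 - z / 2) ^ 3))) := by
      rw [mul_sub, e1]
      ring
    linarith [hmul, expand ▸ hmul]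
  -- FTC for the H function
  have hHder : ∀ z ∈ Ioo (0:ℝ) 1, HasDerivWithinAt
      (fun z : ℝ => f (u + z • v) * ((4:ℝ) * (1 - z / 2) ^ 2)⁻¹)
      ((inner ℝ (f' (u + z • v)) v : ℝ) * ((4:ℝ) * (1 - z / 2) ^ 2)⁻¹ +
        f (u + z • v) * (2 * (1 / (8 * (1 - z / 2) ^ 3)))) (Ioi z) z := by
    intro z hz
    have h := (lineHasDeriv hgrad hmem (Ioo_subset_Icc_self hz)).mul
      ((deriv_q (Ioo_subset_Icc_self hz)).hasDerivWithinAt)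
    exact h.mono_of_mem_nhdsWithin (Icc_mem_nhdsGT_of_mem ⟨hz.1.le, hz.2⟩)
  have hHcont : ContinuousOn
      (fun z : ℝ => f (u + z • v) * ((4:ℝ) * (1 - z / 2) ^ 2)⁻¹) (Icc (0:ℝ) 1) :=
    hf_curve.mul hqcont
  have hH'int : IntervalIntegrable
      (fun z : ℝ => (inner ℝ (f' (u + z • v)) v : ℝ) * ((4:ℝ) * (1 - z / 2) ^ 2)⁻¹ +
        f (u + z • v) * (2 * (1 / (8 * (1 - z / 2) ^ 3)))) volume 0 1 := by
    apply ContinuousOn.intervalIntegrable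
    rw [uIcc_of_le (zero_le_one (α:=ℝ))]
    exact (hΦcont.mul hqcont).add (hf_curve.mul (continuousOn_const.mul hwcont))
  have hHftc : ∫ z in (0:ℝ)..1,
        ((inner ℝ (f' (u + z • v)) v : ℝ) * ((4:ℝ) * (1 - z / 2) ^ 2)⁻¹ +
          f (u + z • v) * (2 * (1 / (8 * (1 - z / 2) ^ 3))))
      = f (u + (1:ℝ) • v) * ((4:ℝ) * (1 - 1 / 2) ^ 2)⁻¹
        - f (u + (0:ℝ) • v) * ((4:ℝ) * (1 - 0 / 2) ^ 2)⁻¹ := by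
    have := integral_eq_sub_of_hasDeriv_right_of_le zero_le_one hHcont hHder hH'int
    convert this using 2 <;> norm_num
  -- integrate the key inequality
  have hintL : IntervalIntegrable (fun z : ℝ =>
      (1 - ν) * f y * (1 / (8 * (1 - z / 2) ^ 2)) -
        ((inner ℝ (f' (u + z • v)) v : ℝ) * ((4:ℝ) * (1 - z / 2) ^ 2)⁻¹ +
          f (u + z • v) * (2 * (1 / (8 * (1 - z / 2) ^ 3))))) volume 0 1 := by
    apply ContinuousOn.intervalIntegrable
    rw [uIcc_of_le (zero_le_one (α:=ℝ))]
    exact ((continuousOn_const.mul hacont).sub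
      ((hΦcont.mul hqcont).add (hf_curve.mul (continuousOn_const.mul hwcont))))
  have hintR : IntervalIntegrable (fun z : ℝ =>
      (1 / (8 * (1 - z / 2) ^ 3)) * (inner ℝ (f' (u + z • v)) (y - xh) : ℝ)) volume 0 1 := by
    apply ContinuousOn.intervalIntegrable
    rw [uIcc_of_le (zero_le_one (α:=ℝ))]
    exact hwcont.mul (hc_curve.inner continuousOn_const)
  have hmono := intervalIntegral.integral_mono_on zero_le_one hintL hintR hkey
  -- compute the left integral
  have hsplit : ∫ z in (0:ℝ)..1,
      ((1 - ν) * f y * (1 / (8 * (1 - z / 2) ^ 2)) -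
        ((inner ℝ (f' (u + z • v)) v : ℝ) * ((4:ℝ) * (1 - z / 2) ^ 2)⁻¹ +
          f (u + z • v) * (2 * (1 / (8 * (1 - z / 2) ^ 3)))))
      = (1 - ν) * f y * (1/4)
        - (f (u + (1:ℝ) • v) * ((4:ℝ) * (1 - 1 / 2) ^ 2)⁻¹
          - f (u + (0:ℝ) • v) * ((4:ℝ) * (1 - 0 / 2) ^ 2)⁻¹) := by
    rw [intervalIntegral.integral_sub (by
      apply ContinuousOn.intervalIntegrable
      rw [uIcc_of_le (zero_le_one (α:=ℝ))]
      exact continuousOn_const.mul hacont) hH'int]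
    rw [hHftc]
    congr 1
    rw [intervalIntegral.integral_const_mul, integral_a]
  -- final assembly
  have hgeq : (∫ z in (0:ℝ)..1, (1 / (8 * (1 - z / 2) ^ 3)) • f' ((z / 2) • (xh - u) + u))
      = ∫ z in (0:ℝ)..1, (1 / (8 * (1 - z / 2) ^ 3)) • f' (u + z • v) := by
    apply intervalIntegral.integral_congr
    intro z _
    simp only [hcurve]
  rw [hgeq, hGinner]
  refine le_trans ?_ hmono
  rw [hsplit]
  have hend1 : u + (1:ℝ) • v = (2:ℝ)⁻¹ • (xh + u) := by
    apply PiLp.ext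
    intro i
    rw [happ, PiLp.smul_apply, PiLp.add_apply, smul_eq_mul]
    ring
  have hend0 : u + (0:ℝ) • v = u := by simp
  have hfu : 0 ≤ f u := hnonneg u hu
  rw [hend1, hend0]
  have e1 : ((4:ℝ) * (1 - 1 / 2) ^ 2)⁻¹ = 1 := by norm_num
  have e0 : ((4:ℝ) * (1 - 0 / 2) ^ 2)⁻¹ = 4⁻¹ := by norm_num
  rw [e1, e0]
  linarith [hfu]

lemma gnorm {f' : E → E} {G : ℝ}
    (hcont : ContinuousOn f' (cube d))
    (hbdd : ∀ x ∈ cube d, ‖f' x‖ ≤ G)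
    {u xh : E} (hu : u ∈ cube d) (hxh : xh ∈ cube d) :
    ‖∫ z in (0:ℝ)..1, (1 / (8 * (1 - z / 2) ^ 3)) • f' ((z / 2) • (xh - u) + u)‖
      ≤ 3/8 * G := by
  have hmem : ∀ z ∈ Icc (0:ℝ) 1, (z / 2) • (xh - u) + u ∈ cube d := by
    intro z hz i
    have h : ((z / 2) • (xh - u) + u) i = z/2 * (xh i - u i) + u i := by
      simp [PiLp.add_apply, PiLp.smul_apply, PiLp.sub_apply, smul_eq_mul]
    rw [h]
    constructor
    · nlinarith [(hu i).1, (hxh i).1, (hu i).2, hz.1, hz.2]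
    · nlinarith [(hu i).2, (hxh i).2, (hu i).1, hz.1, hz.2]
  have hwcont : ContinuousOn (fun z : ℝ => 1 / (8 * (1 - z / 2) ^ 3)) (Icc (0:ℝ) 1) := by
    apply ContinuousOn.div continuousOn_const (by fun_prop)
    intro z hz
    have : (0:ℝ) < 1 - z/2 := by linarith [hz.2]
    positivity
  have hccont : ContinuousOn (fun z : ℝ => f' ((z / 2) • (xh - u) + u)) (Icc (0:ℝ) 1) :=
    hcont.comp (by fun_prop) hmem
  calc ‖∫ z in (0:ℝ)..1, (1 / (8 * (1 - z / 2) ^ 3)) • f' ((z / 2) • (xh - u) + u)‖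
      ≤ ∫ z in (0:ℝ)..1, ‖(1 / (8 * (1 - z / 2) ^ 3)) • f' ((z / 2) • (xh - u) + u)‖ :=
        intervalIntegral.norm_integral_le_integral_norm zero_le_one
    _ ≤ ∫ z in (0:ℝ)..1, (1 / (8 * (1 - z / 2) ^ 3)) * G := by
        apply intervalIntegral.integral_mono_on zero_le_one
        · apply ContinuousOn.intervalIntegrable
          rw [uIcc_of_le (zero_le_one (α:=ℝ))]
          exact (hwcont.smul hccont).norm
        · apply ContinuousOn.intervalIntegrable
          rw [uIcc_of_le (zero_le_one (α:=ℝ))]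
          exact hwcont.mul continuousOn_const
        · intro z hz
          have hw0 : (0:ℝ) ≤ 1 / (8 * (1 - z / 2) ^ 3) := by
            have : (0:ℝ) < 1 - z/2 := by linarith [hz.2]
            positivity
          rw [norm_smul, Real.norm_eq_abs, abs_of_nonneg hw0]
          exact mul_le_mul_of_nonneg_left (hbdd _ (hmem z hz)) hw0
    _ = 3/8 * G := by
        rw [intervalIntegral.integral_mul_const, integral_w]

lemma lipschitz_bound {f : E → ℝ} {f' : E → E}
    (hgrad : ∀ x ∈ cube d, HasGradientWithinAt f (f' x) (cube d) x)
    {G : ℝ} (hbdd : ∀ x ∈ cube d, ‖f' x‖ ≤ G)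
    {x1 x2 : E} (h1 : x1 ∈ cube d) (h2 : x2 ∈ cube d) :
    f x1 - f x2 ≤ G * ‖x1 - x2‖ := by
  have key := Convex.norm_image_sub_le_of_norm_hasFDerivWithin_le
    (f' := fun x => (InnerProductSpace.toDual ℝ (EuclideanSpace ℝ (Fin d)) (f' x) :
      EuclideanSpace ℝ (Fin d) →L[ℝ] ℝ))
    (fun x hx => (hgrad x hx).hasFDerivWithinAt)
    (fun x hx => by
      rw [show ‖(InnerProductSpace.toDual ℝ (EuclideanSpace ℝ (Fin d)) (f' x) :
          EuclideanSpace ℝ (Fin d) →L[ℝ] ℝ)‖ = ‖f' x‖ from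
        (InnerProductSpace.toDual ℝ (EuclideanSpace ℝ (Fin d))).norm_map (f' x)]
      exact hbdd x hx)
    cube_convex h2 h1
  rw [Real.norm_eq_abs] at key
  exact le_trans (le_abs_self _) key

set_option maxHeartbeats 1000000 in
/-- deterministic core of Theorem 1: reduction of the
`((1-ν)/4)`-regret of D-OCSM to the regret of D-OCO on the boosted linear losses,
plus the cumulative consensus error. -/
theorem reduction_boosting_nonmonotone
    (d n T : ℕ) (hd : 1 ≤ d) (hn : 1 ≤ n) (hT : 1 ≤ T)
    (K : Set (EuclideanSpace ℝ (Fin d))) (hKcvx : Convex ℝ K) (hKX : K ⊆ cube d)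
    (u : EuclideanSpace ℝ (Fin d)) (hu : u ∈ K)
    (α ν : ℝ) (hν : ν = ⨆ i, |u i|) (hα : α = (1 - ν) / 4)
    (G : ℝ)
    (f : Fin T → Fin n → EuclideanSpace ℝ (Fin d) → ℝ)
    (f' : Fin T → Fin n → EuclideanSpace ℝ (Fin d) → EuclideanSpace ℝ (Fin d))
    (hsub : ∀ t j, DRSubmodularOn d (f t j))
    (hnonneg : ∀ t j, ∀ x ∈ cube d, 0 ≤ f t j x)
    (hgrad : ∀ t j, ∀ x ∈ cube d, HasGradientWithinAt (f t j) (f' t j x) (cube d) x)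
    (hcont : ∀ t j, ContinuousOn (f' t j) (cube d))
    (hbdd : ∀ t j, ∀ x ∈ cube d, ‖f' t j x‖ ≤ G)
    (xhat : Fin T → Fin n → EuclideanSpace ℝ (Fin d))
    (hxhat : ∀ t j, xhat t j ∈ K)
    (xdec : Fin T → Fin n → EuclideanSpace ℝ (Fin d))
    (hxdec : ∀ t j, xdec t j = (2:ℝ)⁻¹ • (xhat t j + u))
    (g : Fin T → Fin n → EuclideanSpace ℝ (Fin d) → EuclideanSpace ℝ (Fin d))
    (hg : ∀ t j, ∀ x ∈ K, g t j x =
      ∫ z in (0:ℝ)..1, (1 / (8 * (1 - z / 2) ^ 3)) • f' t j ((z / 2) • (x - u) + u)) :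
    ∀ i : Fin n, ∀ x ∈ K,
      α * (∑ t, ∑ j, f t j x) - ∑ t, ∑ j, f t j (xdec t i) ≤
        (∑ t, ∑ j, (inner ℝ (g t j (xhat t j)) (x - xhat t i) : ℝ)) +
          G * ∑ t, ∑ j, ‖xhat t j - xhat t i‖ := by
  intro i x hx
  haveI : Nonempty (Fin d) := ⟨⟨0, hd⟩⟩
  have huc : u ∈ cube d := hKX hu
  have hν0 : (0:ℝ) ≤ ν := by
    rw [hν]
    have hbb : BddAbove (Set.range fun k : Fin d => |u k|) :=
      Set.Finite.bddAbove (Set.finite_range _)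
    exact le_trans (abs_nonneg (u ⟨0, hd⟩))
      (le_ciSup (f := fun k : Fin d => |u k|) hbb ⟨0, hd⟩)
  have hν1 : ν ≤ 1 := by
    rw [hν]
    apply ciSup_le
    intro k
    rw [abs_of_nonneg (huc k).1]
    exact (huc k).2
  have hνu : ∀ k, u k ≤ ν := by
    intro k
    rw [hν]
    have hbb : BddAbove (Set.range fun k : Fin d => |u k|) :=
      Set.Finite.bddAbove (Set.finite_range _)
    exact le_trans (le_abs_self _) (le_ciSup (f := fun k : Fin d => |u k|) hbb k)
  have hG0 : (0:ℝ) ≤ G := le_trans (norm_nonneg _) (hbdd ⟨0, hT⟩ ⟨0, hn⟩ u huc)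
  have hxc : x ∈ cube d := hKX hx
  have hdecK : ∀ t j, xdec t j ∈ K := by
    intro t j
    rw [hxdec, smul_add]
    exact hKcvx (hxhat t j) hu (by norm_num) (by norm_num) (by norm_num)
  have key : ∀ t j, α * f t j x - f t j (xdec t i) ≤
      (inner ℝ (g t j (xhat t j)) (x - xhat t i) : ℝ) + G * ‖xhat t j - xhat t i‖ := by
    intro t j
    have hxhc : xhat t j ∈ cube d := hKX (hxhat t j)
    have hco := core_ineq (hsub t j) (hgrad t j) (hcont t j) (hnonneg t j)
      huc hxhc hxc hν0 hν1 hνu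
    rw [← hg t j _ (hxhat t j), ← hxdec t j, ← hα] at hco
    have hgn : ‖g t j (xhat t j)‖ ≤ 3/8 * G := by
      rw [hg t j _ (hxhat t j)]
      exact gnorm (hcont t j) (hbdd t j) huc hxhc
    have hlip : f t j (xdec t j) - f t j (xdec t i) ≤ G * ‖xdec t j - xdec t i‖ :=
      lipschitz_bound (hgrad t j) (hbdd t j) (hKX (hdecK t j)) (hKX (hdecK t i))
    have hnd : ‖xdec t j - xdec t i‖ = 2⁻¹ * ‖xhat t j - xhat t i‖ := by
      have hdd : xdec t j - xdec t i = (2:ℝ)⁻¹ • (xhat t j - xhat t i) := by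
        rw [hxdec, hxdec, ← smul_sub]
        congr 1
        abel
      rw [hdd, norm_smul, Real.norm_eq_abs]
      norm_num
    rw [hnd] at hlip
    have hshift : (inner ℝ (g t j (xhat t j)) (x - xhat t j) : ℝ)
        = inner ℝ (g t j (xhat t j)) (x - xhat t i)
          + inner ℝ (g t j (xhat t j)) (xhat t i - xhat t j) := by
      rw [← inner_add_right]
      congr 1
      abel
    have hcs : (inner ℝ (g t j (xhat t j)) (xhat t i - xhat t j) : ℝ)
        ≤ (3/8 * G) * ‖xhat t j - xhat t i‖ := by
      calc (inner ℝ (g t j (xhat t j)) (xhat t i - xhat t j) : ℝ)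
          ≤ ‖g t j (xhat t j)‖ * ‖xhat t i - xhat t j‖ := real_inner_le_norm _ _
        _ ≤ (3/8 * G) * ‖xhat t j - xhat t i‖ := by
            rw [norm_sub_rev]
            exact mul_le_mul_of_nonneg_right hgn (norm_nonneg _)
    have hn0 : (0:ℝ) ≤ ‖xhat t j - xhat t i‖ := norm_nonneg _
    rw [hshift] at hco
    linarith [hco, hlip, hcs, mul_nonneg hG0 hn0]
  calc α * (∑ t, ∑ j, f t j x) - ∑ t, ∑ j, f t j (xdec t i)
      = ∑ t, ∑ j, (α * f t j x - f t j (xdec t i)) := by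
        rw [Finset.mul_sum, ← Finset.sum_sub_distrib]
        apply Finset.sum_congr rfl
        intro t _
        rw [Finset.mul_sum, ← Finset.sum_sub_distrib]
    _ ≤ ∑ t, ∑ j, ((inner ℝ (g t j (xhat t j)) (x - xhat t i) : ℝ)
          + G * ‖xhat t j - xhat t i‖) :=
        Finset.sum_le_sum (fun t _ => Finset.sum_le_sum (fun j _ => key t j))
    _ = (∑ t, ∑ j, (inner ℝ (g t j (xhat t j)) (x - xhat t i) : ℝ))
          + G * ∑ t, ∑ j, ‖xhat t j - xhat t i‖ := by
        rw [Finset.mul_sum, ← Finset.sum_add_distrib]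
        apply Finset.sum_congr rfl
        intro t _
        rw [Finset.mul_sum, ← Finset.sum_add_distrib]
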